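/- Let ω̃₁², ..., ω̃_p² be positive reals with ω̃_j² ≤ σ₀² for all j and ∏_{j=1}^p ω̃_j² = 1 (equivalently Σ_j log ω̃_j² = 0). Then Σ_{j=1}^p (1 − ω̃_j²) ≤ −(1/(2σ₀⁴))·Σ_{j=1}^p (ω̃_j² − 1)², i.e., Σ_{j=1}^p (ω̃_j² − 1) ≥ (1/(2σ₀⁴))·Σ_{j=1}^p (ω̃_j² − 1)². -/

import Mathlib

lemma key_log (s : ℝ) (hs : 1 ≤ s) {t : ℝ} (ht : 0 < t) (hts : t ≤ s) :
    Real.log t ≤ (t - 1) - (t - 1) ^ 2 / (2 * s ^ 2) := by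
  have hs0 : (0:ℝ) < s := lt_of_lt_of_le one_pos hs
  set g : ℝ → ℝ := fun u => u - 1 - (u - 1) ^ 2 / (2 * s ^ 2) - Real.log u with hg
  have hderiv : ∀ u : ℝ, 0 < u → HasDerivAt g (1 - (u - 1) / s ^ 2 - 1 / u) u := by
    intro u hu
    have h1 : HasDerivAt (fun u : ℝ => u - 1) 1 u := (hasDerivAt_id u).sub_const 1
    have h2 : HasDerivAt (fun u : ℝ => (u - 1) ^ 2 / (2 * s ^ 2)) ((u - 1) / s ^ 2) u := by
      have h2' := (h1.pow 2).div_const (2 * s ^ 2)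
      refine h2'.congr_deriv ?_
      field_simp
      ring
    have h3 : HasDerivAt Real.log (1 / u) u := by
      simpa [one_div] using Real.hasDerivAt_log (ne_of_gt hu)
    exact (h1.sub h2).sub h3
  have hg1 : g 1 = 0 := by simp [hg]
  have hcont : ∀ a b : ℝ, 0 < a → ContinuousOn g (Set.Icc a b) := by
    intro a b ha
    apply ContinuousOn.sub
    · fun_prop
    · apply Real.continuousOn_log.mono
      intro x hx
      exact ne_of_gt (lt_of_lt_of_le ha hx.1)
  suffices h : 0 ≤ g t by
    simp only [hg] at h; linarith
  rcases le_total 1 t with h1t | ht1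
  · have hmono : MonotoneOn g (Set.Icc 1 s) := by
      apply monotoneOn_of_deriv_nonneg (convex_Icc 1 s) (hcont 1 s one_pos)
      · intro u hu
        rw [interior_Icc] at hu
        exact (hderiv u (lt_trans one_pos hu.1)).differentiableAt.differentiableWithinAt
      intro u hu
      rw [interior_Icc] at hu
      have hu0 : 0 < u := lt_trans one_pos hu.1
      rw [(hderiv u hu0).deriv]
      have heq : 1 - (u - 1) / s ^ 2 - 1 / u = ((u - 1) * (s ^ 2 - u)) / (u * s ^ 2) := by
        field_simp
        ring
      rw [heq]
      apply div_nonneg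
      · have h1 : (0:ℝ) ≤ u - 1 := by linarith [hu.1.le]
        have h2 : u ≤ s ^ 2 := by nlinarith [hu.2.le]
        exact mul_nonneg h1 (by linarith)
      · positivity
    have := hmono (Set.mem_Icc.mpr ⟨le_refl 1, le_trans h1t hts⟩)
      (Set.mem_Icc.mpr ⟨h1t, hts⟩) h1t
    linarith [hg1 ▸ this]
  · have hanti : AntitoneOn g (Set.Icc t 1) := by
      apply antitoneOn_of_deriv_nonpos (convex_Icc t 1) (hcont t 1 ht)
      · intro u hu
        rw [interior_Icc] at hu
        exact (hderiv u (lt_trans ht hu.1)).differentiableAt.differentiableWithinAt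
      intro u hu
      rw [interior_Icc] at hu
      have hu0 : 0 < u := lt_trans ht hu.1
      rw [(hderiv u hu0).deriv]
      have heq : 1 - (u - 1) / s ^ 2 - 1 / u = ((u - 1) * (s ^ 2 - u)) / (u * s ^ 2) := by
        field_simp
        ring
      rw [heq]
      apply div_nonpos_of_nonpos_of_nonneg
      · have h1 : u - 1 ≤ 0 := by linarith [hu.2.le]
        have h2 : u ≤ s ^ 2 := by nlinarith [hu.2.le]
        exact mul_nonpos_of_nonpos_of_nonneg h1 (by linarith)
      · positivity
    have := hanti (Set.mem_Icc.mpr ⟨le_refl t, ht1⟩)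
      (Set.mem_Icc.mpr ⟨ht1, le_refl 1⟩) ht1
    linarith [hg1 ▸ this]

theorem stmt_18 (p : ℕ) (σ₀ : ℝ) (w : Fin p → ℝ)
    (hwpos : ∀ j, 0 < w j) (hwle : ∀ j, w j ≤ σ₀ ^ 2)
    (hprod : ∏ j, w j = 1) :
    (1 / (2 * σ₀ ^ 4)) * ∑ j, (w j - 1) ^ 2 ≤ ∑ j, (w j - 1) := by
  obtain rfl | hp := Nat.eq_zero_or_pos p
  · simp
  -- some w j ≥ 1
  have hex : ∃ j, 1 ≤ w j := by
    by_contra hno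
    push_neg at hno
    have : Nonempty (Fin p) := ⟨⟨0, hp⟩⟩
    have hne : (Finset.univ : Finset (Fin p)).Nonempty := Finset.univ_nonempty
    have := Finset.prod_lt_prod_of_nonempty (f := w) (g := fun _ => (1:ℝ))
      (fun j _ => hwpos j) (fun j _ => hno j) hne
    simp [hprod] at this
  obtain ⟨j0, hj0⟩ := hex
  have hs1 : 1 ≤ σ₀ ^ 2 := le_trans hj0 (hwle j0)
  have hσ4 : σ₀ ^ 4 = (σ₀ ^ 2) ^ 2 := by ring
  have hσ4pos : 0 < σ₀ ^ 4 := by nlinarith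
  have hlogsum : ∑ j, Real.log (w j) = 0 := by
    rw [← Real.log_prod (fun j _ => (hwpos j).ne'), hprod, Real.log_one]
  have hkey : ∀ j, Real.log (w j) ≤ (w j - 1) - (w j - 1) ^ 2 / (2 * σ₀ ^ 4) := by
    intro j
    rw [hσ4]
    exact key_log (σ₀ ^ 2) hs1 (hwpos j) (hwle j)
  have hsum : (0:ℝ) ≤ ∑ j, ((w j - 1) - (w j - 1) ^ 2 / (2 * σ₀ ^ 4)) := by
    rw [← hlogsum]
    exact Finset.sum_le_sum fun j _ => hkey j
  rw [Finset.sum_sub_distrib, ← Finset.sum_div] at hsum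
  rw [one_div, inv_mul_eq_div]
  linarith
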